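/- Let G be a simple graph with no ds-completable card. Suppose there is a d-neighbourly vertex set j with |j| = d + 1, and let i be a vertex set disjoint from j. Then the number of edges between i and j is at least χ_{ij} + 1, where χ_{ij} = m_j − (n − 1 − n_i)·n_j with m_j the degree sum of j, n_j = |j|, n_i = |i|, and n = |V(G)|. -/

import Mathlib

open SimpleGraph Finset
open scoped Classical

variable {V : Type*}

/-- The degree of a vertex `u` in a simple graph `G`. -/
noncomputable def deg (G : SimpleGraph V) (u : V) : ℕ := (G.neighborSet u).ncard

/-- The degree of `u` in the card `G − v` (the vertex-deleted subgraph at `v`). -/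
noncomputable def cardDeg (G : SimpleGraph V) (v u : V) : ℕ := (G.neighborSet u \ {v}).ncard

/-- The card `G − v` is ds-completable: for each degree `d`, the vertices of degree `d`
in `G − v` are either all neighbours of `v` in `G` or all non-neighbours of `v` in `G`. -/
def DsCompletable (G : SimpleGraph V) (v : V) : Prop :=
  ∀ d : ℕ, (∀ u, u ≠ v → cardDeg G v u = d → G.Adj v u) ∨
           (∀ u, u ≠ v → cardDeg G v u = d → ¬ G.Adj v u)

/-- A vertex is bad if the graph contains a vertex of degree one less. -/
def Bad (G : SimpleGraph V) (v : V) : Prop := ∃ w, deg G w + 1 = deg G v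

/-- A vertex is dull if the graph contains a vertex of degree one more. -/
def Dull (G : SimpleGraph V) (v : V) : Prop := ∃ w, deg G w = deg G v + 1

/-- ε(s,t): the number of stubs on `s` used by edges from `s` to `t`
(for disjoint `s`, `t` this is the number of edges between them; for `s = t`
it is twice the number of edges inside `s`). -/
noncomputable def stubs (G : SimpleGraph V) (s t : Finset V) : ℕ :=
  ((s ×ˢ t).filter fun p => G.Adj p.1 p.2).card

/-- A vertex set is neighbourly if no vertex outside the set has a degree one less
than that of a vertex in the set. -/
def Neighbourly (G : SimpleGraph V) (K : Finset V) : Prop :=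
  ∀ u ∉ K, ∀ w ∈ K, deg G u + 1 ≠ deg G w

/-- A vertex set is `d`-neighbourly if it contains a vertex `v` of degree `d` such that
no vertex outside the set has a degree one less than that of any member other than `v`. -/
def DNeighbourly (G : SimpleGraph V) (d : ℕ) (K : Finset V) : Prop :=
  ∃ v ∈ K, deg G v = d ∧ ∀ u ∉ K, ∀ w ∈ K, w ≠ v → deg G u + 1 ≠ deg G w

lemma deg_eq [Fintype V] (G : SimpleGraph V) (u : V) :
    deg G u = (univ.filter (G.Adj u)).card := by
  rw [deg, Set.ncard_eq_toFinset_card']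
  congr 1
  ext w
  simp [SimpleGraph.mem_neighborSet]

lemma cardDeg_of_adj [Fintype V] {G : SimpleGraph V} {v u : V} (h : G.Adj v u) :
    cardDeg G v u + 1 = deg G u := by
  rw [cardDeg, deg]
  exact Set.ncard_diff_singleton_add_one (by simpa using h.symm) (Set.toFinite _)

lemma cardDeg_of_not_adj {G : SimpleGraph V} {v u : V} (h : ¬ G.Adj v u) :
    cardDeg G v u = deg G u := by
  rw [cardDeg, deg, Set.diff_singleton_eq_self]
  simp only [SimpleGraph.mem_neighborSet]
  exact fun h' => h h'.symm

lemma stubs_eq (G : SimpleGraph V) (i j : Finset V) :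
    stubs G i j = ∑ v ∈ j, (i.filter (fun u => G.Adj v u)).card := by
  unfold stubs
  rw [Finset.card_filter, Finset.sum_product, Finset.sum_comm]
  refine Finset.sum_congr rfl fun v _ => ?_
  rw [Finset.card_filter]
  exact Finset.sum_congr rfl fun u _ => by rw [G.adj_comm]

/-- In a graph with no ds-completable card, if `j` is a `d`-neighbourly set of size `d + 1`
and `i` is disjoint from `j`, then `ε(i,j) ≥ χ_{ij} + 1`. -/
theorem stmt15 [Fintype V] (G : SimpleGraph V)
    (h : ∀ v : V, ¬ DsCompletable G v) (d : ℕ) (i j : Finset V)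
    (hj : DNeighbourly G d j) (hcard : j.card = d + 1) (hd : Disjoint i j) :
    (∑ v ∈ j, deg G v : ℤ) - ((Fintype.card V : ℤ) - 1 - i.card) * j.card + 1 ≤
      (stubs G i j : ℤ) := by
  obtain ⟨v, hvj, hdegv, hnbr⟩ := hj
  by_contra hcon
  push_neg at hcon
  -- every member of j lies outside i
  have hnotin : ∀ w ∈ j, w ∉ i := fun w hw => Finset.disjoint_right.1 hd hw
  have hvc : v ∈ iᶜ := by simpa using hnotin v hvj
  have hc1 : 1 ≤ iᶜ.card := Finset.card_pos.2 ⟨v, hvc⟩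
  -- degree splitting
  have hdeg_split : ∀ w ∈ j, deg G w
      = (i.filter (G.Adj w)).card + (iᶜ.filter (G.Adj w)).card := by
    intro w _
    rw [deg_eq]
    conv_lhs => rw [← Finset.union_compl i, Finset.filter_union]
    exact Finset.card_union_of_disjoint
      ((disjoint_compl_right : Disjoint i iᶜ).mono (Finset.filter_subset _ _) (Finset.filter_subset _ _))
  have hsum : ∑ w ∈ j, deg G w
      = stubs G i j + ∑ w ∈ j, (iᶜ.filter (G.Adj w)).card := by
    rw [stubs_eq, ← Finset.sum_add_distrib]
    exact Finset.sum_congr rfl hdeg_split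
  -- bound each term
  have hbound : ∀ w ∈ j, (iᶜ.filter (G.Adj w)).card ≤ iᶜ.card - 1 := by
    intro w hw
    have hwc : w ∈ iᶜ := by simpa using hnotin w hw
    have hsub : iᶜ.filter (G.Adj w) ⊆ iᶜ.erase w := by
      intro u hu
      simp only [Finset.mem_filter] at hu
      exact Finset.mem_erase.2 ⟨fun he => G.irrefl (he ▸ hu.2), hu.1⟩
    calc (iᶜ.filter (G.Adj w)).card ≤ (iᶜ.erase w).card := Finset.card_le_card hsub
      _ = iᶜ.card - 1 := Finset.card_erase_of_mem hwc
  -- translate hcon into a ℕ inequality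
  have hcompl : ((iᶜ.card : ℤ)) = (Fintype.card V : ℤ) - i.card := by
    rw [Finset.card_compl]
    have hle := Finset.card_le_univ i
    push_cast [Nat.cast_sub hle]
    ring
  have hkey : (iᶜ.card - 1) * j.card ≤ ∑ w ∈ j, (iᶜ.filter (G.Adj w)).card := by
    have h1 : (stubs G i j : ℤ) + ((iᶜ.card - 1 : ℕ) : ℤ) * j.card ≤ (∑ w ∈ j, deg G w : ℤ) := by
      have h2 : ((Fintype.card V : ℤ) - 1 - i.card) = ((iᶜ.card - 1 : ℕ) : ℤ) := by
        rw [Nat.cast_sub hc1, hcompl]; push_cast; ring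
      rw [h2] at hcon
      linarith
    have h3 : stubs G i j + (iᶜ.card - 1) * j.card ≤ ∑ w ∈ j, deg G w := by
      exact_mod_cast h1
    omega
  -- the special vertex v is adjacent to everything outside i except itself
  have htv : (iᶜ.filter (G.Adj v)).card = iᶜ.card - 1 := by
    by_contra hne
    have hlt : (iᶜ.filter (G.Adj v)).card < iᶜ.card - 1 :=
      lt_of_le_of_ne (hbound v hvj) hne
    have : ∑ w ∈ j, (iᶜ.filter (G.Adj w)).card < ∑ _w ∈ j, (iᶜ.card - 1) :=
      Finset.sum_lt_sum (fun w hw => hbound w hw) ⟨v, hvj, hlt⟩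
    rw [Finset.sum_const, smul_eq_mul, Nat.mul_comm] at this
    omega
  have hfe : iᶜ.filter (G.Adj v) = iᶜ.erase v := by
    apply Finset.eq_of_subset_of_card_le
    · intro u hu
      simp only [Finset.mem_filter] at hu
      exact Finset.mem_erase.2 ⟨fun he => G.irrefl (he ▸ hu.2), hu.1⟩
    · rw [Finset.card_erase_of_mem hvc, htv]
  have hadj_all : ∀ u, u ≠ v → u ∉ i → G.Adj v u := by
    intro u huv hui
    have : u ∈ iᶜ.erase v := Finset.mem_erase.2 ⟨huv, by simpa using hui⟩
    rw [← hfe] at this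
    exact (Finset.mem_filter.1 this).2
  -- the neighbourhood of v is exactly j minus v
  have hNv : univ.filter (G.Adj v) = j.erase v := by
    apply (Finset.eq_of_subset_of_card_le ?_ ?_).symm
    · intro w hw
      obtain ⟨hwv, hwj⟩ := Finset.mem_erase.1 hw
      exact Finset.mem_filter.2 ⟨Finset.mem_univ _, hadj_all w hwv (hnotin w hwj)⟩
    · rw [Finset.card_erase_of_mem hvj, hcard, ← deg_eq, hdegv]
      omega
  have hadj_iff : ∀ u, G.Adj v u ↔ (u ∈ j ∧ u ≠ v) := by
    intro u
    constructor
    · intro ha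
      have : u ∈ j.erase v := by
        rw [← hNv]; exact Finset.mem_filter.2 ⟨Finset.mem_univ _, ha⟩
      exact ⟨(Finset.mem_erase.1 this).2, (Finset.mem_erase.1 this).1⟩
    · intro ⟨huj, huv⟩
      exact hadj_all u huv (hnotin u huj)
  -- derive ds-completability of v, contradiction
  apply h v
  intro d'
  by_cases hc : ∃ w ∈ j, w ≠ v ∧ cardDeg G v w = d'
  · left
    intro u hu hdu
    by_contra hnadj
    have hu_nj : u ∉ j := fun huj => hnadj ((hadj_iff u).2 ⟨huj, hu⟩)
    obtain ⟨w, hwj, hwv, hdw⟩ := hc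
    have hwadj : G.Adj v w := (hadj_iff w).2 ⟨hwj, hwv⟩
    have h1 := cardDeg_of_adj hwadj
    have h2 := cardDeg_of_not_adj hnadj
    exact hnbr u hu_nj w hwj hwv (by omega)
  · right
    intro u hu hdu hadj
    exact hc ⟨u, ((hadj_iff u).1 hadj).1, hu, hdu⟩
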